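/- For every real a > 0, log Γ(a) = (1/2)·log(2π) − a + lim_{M→∞} [ −M + (a + M − 1/2)·log(a + M) − Σ_{n=0}^{M−1} log(a+n) ]; that is, the sequence M ↦ −M + (a+M−1/2)log(a+M) − Σ_{n=0}^{M−1} log(a+n) converges to log Γ(a) − (1/2)log(2π) + a as M → ∞. -/

import Mathlib

open Real Filter

/-- Limit representation of `log Γ(a)` for real `a > 0`. -/
theorem logGamma_limit (a : ℝ) (ha : 0 < a) :
    Tendsto (fun M : ℕ =>
        -(M : ℝ) + (a + M - 1/2) * Real.log (a + M) - ∑ n ∈ Finset.range M, Real.log (a + n))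
      atTop (nhds (Real.log (Real.Gamma a) - (1/2) * Real.log (2 * Real.pi) + a)) := by
  have hπ : (0:ℝ) < Real.pi := Real.pi_pos
  -- Part A : (a + M + 1/2) * log (1 + a / M) → a
  have h0 : Tendsto (fun M : ℕ => Real.log (1 + a / (M:ℝ))) atTop (nhds 0) := by
    have h1 : Tendsto (fun M : ℕ => 1 + a / (M:ℝ)) atTop (nhds 1) := by
      simpa using
        (tendsto_const_nhds (x := (1:ℝ))).add
          (Filter.Tendsto.div_atTop (tendsto_const_nhds (x := a)) tendsto_natCast_atTop_atTop)
    simpa using h1.log one_ne_zero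
  have hA : Tendsto (fun M : ℕ => (a + (M:ℝ) + 1/2) * Real.log (1 + a / (M:ℝ)))
      atTop (nhds a) := by
    have h1 : Tendsto (fun M : ℕ => (M:ℝ) * Real.log (1 + a / (M:ℝ))) atTop (nhds a) :=
      (Real.tendsto_mul_log_one_add_div_atTop a).comp tendsto_natCast_atTop_atTop
    have h2 := h1.add (h0.const_mul (a + 1/2))
    have h3 : Tendsto (fun M : ℕ =>
        (M:ℝ) * Real.log (1 + a / (M:ℝ)) + (a + 1/2) * Real.log (1 + a / (M:ℝ)))
        atTop (nhds a) := by simpa using h2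
    exact h3.congr (fun M => by ring)
  -- Part B : Stirling in log form
  have hB : Tendsto (fun M : ℕ => Real.log (Stirling.stirlingSeq M) + (1/2) * Real.log 2)
      atTop (nhds ((1/2) * Real.log (2 * Real.pi))) := by
    have h1 : Tendsto (fun M : ℕ => Real.log (Stirling.stirlingSeq M)) atTop
        (nhds (Real.log (Real.sqrt Real.pi))) :=
      Stirling.tendsto_stirlingSeq_sqrt_pi.log (Real.sqrt_ne_zero'.mpr hπ)
    have h2 := h1.add (tendsto_const_nhds (x := (1/2) * Real.log 2))
    have : Real.log (Real.sqrt Real.pi) + (1/2) * Real.log 2 = (1/2) * Real.log (2 * Real.pi) := by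
      rw [Real.log_sqrt hπ.le, Real.log_mul two_ne_zero hπ.ne']
      ring
    rwa [this] at h2
  -- log of GammaSeq
  have hG : Tendsto (fun M : ℕ => Real.log (Real.GammaSeq a M)) atTop
      (nhds (Real.log (Real.Gamma a))) :=
    (Real.GammaSeq_tendsto_Gamma a).log (Real.Gamma_pos_of_pos ha).ne'
  have hmain := (hG.add hA).sub hB
  have hlim : Real.log (Real.Gamma a) + a - (1/2) * Real.log (2 * Real.pi)
      = Real.log (Real.Gamma a) - (1/2) * Real.log (2 * Real.pi) + a := by ring
  rw [hlim] at hmain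
  refine hmain.congr' ?_
  filter_upwards [eventually_ge_atTop 1] with M hM
  have hM0 : (0:ℝ) < (M:ℝ) := by exact_mod_cast Nat.lt_of_lt_of_le Nat.zero_lt_one hM
  have haM : (0:ℝ) < a + M := by positivity
  -- expand log GammaSeq
  have hprod : (0:ℝ) < ∏ j ∈ Finset.range (M + 1), (a + (j:ℝ)) :=
    Finset.prod_pos fun j _ => by positivity
  have hfact : (0:ℝ) < (M.factorial : ℝ) := by exact_mod_cast M.factorial_pos
  have h1 : Real.log (Real.GammaSeq a M)
      = a * Real.log M + Real.log (M.factorial : ℝ) - ∑ j ∈ Finset.range (M + 1), Real.log (a + j) := by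
    rw [Real.GammaSeq, Real.log_div (by positivity) hprod.ne', Real.log_mul (by positivity)
      hfact.ne', Real.log_rpow hM0, Real.log_prod (fun j _ => by positivity)]
  -- expand log (1 + a/M)
  have h2 : Real.log (1 + a / (M:ℝ)) = Real.log (a + M) - Real.log M := by
    rw [← Real.log_div haM.ne' hM0.ne']
    congr 1
    field_simp
    ring
  -- expand log stirlingSeq
  have h3 : Real.log (Stirling.stirlingSeq M)
      = Real.log (M.factorial : ℝ) - (1/2) * (Real.log 2 + Real.log M) - M * (Real.log M - 1) := by
    have hs : (0:ℝ) < Real.sqrt (2 * M) := Real.sqrt_pos.mpr (by positivity)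
    have hp : (0:ℝ) < ((M:ℝ) / Real.exp 1) ^ M := by positivity
    rw [Stirling.stirlingSeq, Real.log_div hfact.ne' (by positivity),
      Real.log_mul hs.ne' hp.ne', Real.log_sqrt (by positivity), Real.log_pow,
      Real.log_div hM0.ne' (Real.exp_pos 1).ne', Real.log_exp,
      Real.log_mul two_ne_zero hM0.ne']
    ring
  have hsum : ∑ j ∈ Finset.range (M + 1), Real.log (a + (j:ℝ))
      = (∑ n ∈ Finset.range M, Real.log (a + (n:ℝ))) + Real.log (a + M) :=
    Finset.sum_range_succ _ _
  rw [h1, h2, h3, hsum]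
  ring
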